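/- Let β ∈ [0,1), λ = 1−β, let n satisfy Assumption 1, and set γ* = δ*/λ. Let s be real with |s| < 1 such that ξ = (β−s)/(1−s) satisfies |ξ| < 1. Then lim_{t→∞} (1/n_t)·∫_0^t n_τ·(Z_{t−τ}(s) − β) dτ = −Σ_{k=1}^∞ ξ^k/(γ*+k), where Z_u(s) = 1 − λ/(1 − ξ e^{−λu}). Equivalently, lim_{t→∞} (a_t/n_t)(𝒴_t(s) − β) = −Σ_{k=1}^∞ ξ^k/(γ*+k). -/

import Mathlib

open Filter Real intervalIntegral
open MeasureTheory Set

/-- Assumption 1 on the wild-type growth function `n`. -/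
def Assumption1 (n : ℝ → ℝ) : Prop :=
  (∀ τ : ℝ, τ < 0 → n τ = 0) ∧
  ContinuousOn n (Set.Ioi 0) ∧
  Filter.Tendsto n (nhdsWithin 0 (Set.Ioi 0)) (nhds (n 0)) ∧
  (∀ τ : ℝ, 0 < τ → 0 < n τ) ∧
  MonotoneOn n (Set.Ioi 0) ∧
  (∀ x : ℝ, 0 ≤ x → ∃ L : ℝ, 0 < L ∧
    Filter.Tendsto (fun t : ℝ => n (t - x) / n t) Filter.atTop (nhds L))

lemma aux_monotone {n : ℝ → ℝ} (hzero : ∀ τ : ℝ, τ < 0 → n τ = 0)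
    (hrc : Filter.Tendsto n (nhdsWithin 0 (Set.Ioi 0)) (nhds (n 0)))
    (hpos : ∀ τ : ℝ, 0 < τ → 0 < n τ)
    (hmono : MonotoneOn n (Set.Ioi 0)) : Monotone n := by
  have h0 : 0 ≤ n 0 :=
    ge_of_tendsto hrc (by
      filter_upwards [self_mem_nhdsWithin] with τ hτ
      exact (hpos τ hτ).le)
  have h0b : ∀ b : ℝ, 0 < b → n 0 ≤ n b := by
    intro b hb
    refine le_of_tendsto hrc ?_
    filter_upwards [self_mem_nhdsWithin,
      mem_nhdsWithin_of_mem_nhds (Iio_mem_nhds hb)] with τ h1 h2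
    exact hmono h1 hb h2.le
  intro a b hab
  rcases lt_trichotomy a 0 with ha | ha | ha
  · rw [hzero a ha]
    rcases lt_trichotomy b 0 with hb | hb | hb
    · rw [hzero b hb]
    · rw [hb]; exact h0
    · exact (hpos b hb).le
  · subst ha
    rcases eq_or_lt_of_le hab with hb | hb
    · rw [← hb]
    · exact h0b b hb
  · exact hmono ha (lt_of_lt_of_le ha hab) hab

lemma aux_delta_nonneg {n : ℝ → ℝ} {δ : ℝ} (hpos : ∀ τ : ℝ, 0 < τ → 0 < n τ)
    (hmono : Monotone n)
    (hδ : Filter.Tendsto (fun t : ℝ => Real.log (n t) / t) Filter.atTop (nhds δ)) :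
    0 ≤ δ := by
  have h1 : Filter.Tendsto (fun t : ℝ => Real.log (n 1) / t) Filter.atTop (nhds 0) :=
    tendsto_const_nhds.div_atTop tendsto_id
  refine le_of_tendsto_of_tendsto h1 hδ ?_
  filter_upwards [eventually_ge_atTop (1 : ℝ)] with t ht
  have ht0 : (0:ℝ) < t := by linarith
  exact (div_le_div_iff_of_pos_right ht0).mpr (Real.log_le_log (hpos 1 one_pos) (hmono ht))

lemma aux_ratio {n : ℝ → ℝ} {δ : ℝ}
    (hpos : ∀ τ : ℝ, 0 < τ → 0 < n τ)
    (hmono : Monotone n)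
    (hδ : Filter.Tendsto (fun t : ℝ => Real.log (n t) / t) Filter.atTop (nhds δ))
    (hδ0 : 0 ≤ δ)
    (hlim : ∀ x : ℝ, 0 ≤ x → ∃ L : ℝ, 0 < L ∧
      Filter.Tendsto (fun t : ℝ => n (t - x) / n t) Filter.atTop (nhds L)) :
    ∀ x : ℝ, 0 ≤ x →
      Filter.Tendsto (fun t : ℝ => n (t - x) / n t) Filter.atTop
        (nhds (Real.exp (-δ * x))) := by
  obtain ⟨L, hL⟩ : ∃ L : ℝ → ℝ, ∀ x : ℝ, 0 ≤ x → 0 < L x ∧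
      Filter.Tendsto (fun t : ℝ => n (t - x) / n t) Filter.atTop (nhds (L x)) := by
    refine ⟨fun x => if h : 0 ≤ x then (hlim x h).choose else 1, fun x hx => ?_⟩
    simp only [dif_pos hx]
    exact (hlim x hx).choose_spec
  -- multiplicativity
  have Lmul : ∀ x y : ℝ, 0 ≤ x → 0 ≤ y → L (x + y) = L x * L y := by
    intro x y hx hy
    have h1 : Filter.Tendsto (fun t : ℝ => n (t - y - x) / n (t - y)) Filter.atTop
        (nhds (L x)) := by
      have h := (hL x hx).2.comp (tendsto_atTop_add_const_right Filter.atTop (-y) tendsto_id)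
      simpa [Function.comp_def, sub_eq_add_neg, add_comm, add_left_comm, add_assoc] using h
    have h2 := h1.mul (hL y hy).2
    refine tendsto_nhds_unique (hL (x + y) (by linarith)).2 (h2.congr' ?_)
    filter_upwards [eventually_gt_atTop y] with t ht
    have hny : n (t - y) ≠ 0 := (hpos _ (by linarith)).ne'
    have e1 : t - (x + y) = t - y - x := by ring
    rw [e1, div_mul_div_comm, mul_comm (n (t - y - x)) (n (t - y)),
      mul_div_mul_left _ _ hny]
  -- L 0 = 1
  have L0 : L 0 = 1 := by
    refine tendsto_nhds_unique (hL 0 le_rfl).2 (tendsto_const_nhds.congr' ?_)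
    filter_upwards [eventually_gt_atTop (0 : ℝ)] with t ht
    rw [sub_zero, div_self (hpos t ht).ne']
  -- antitone
  have Lanti : ∀ x y : ℝ, 0 ≤ x → x ≤ y → L y ≤ L x := by
    intro x y hx hxy
    refine le_of_tendsto_of_tendsto (hL y (hx.trans hxy)).2 (hL x hx).2 ?_
    filter_upwards [eventually_gt_atTop y] with t ht
    have hnt : 0 < n t := hpos t (by linarith)
    exact (div_le_div_iff_of_pos_right hnt).mpr (hmono (by linarith))
  -- identify L 1 via Cesàro
  have hL1pos := (hL 1 zero_le_one).1
  have hL1 : Filter.Tendsto (fun j : ℕ => n ((j : ℝ) + 1) / n ((j : ℝ) + 2)) Filter.atTop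
      (nhds (L 1)) := by
    have h := (hL 1 zero_le_one).2.comp
      (tendsto_atTop_add_const_right Filter.atTop (2 : ℝ) tendsto_natCast_atTop_atTop)
    have e : ∀ j : ℕ, (j : ℝ) + 2 - 1 = (j : ℝ) + 1 := fun j => by ring
    simpa [Function.comp_def, e] using h
  have hdlim : Filter.Tendsto
      (fun j : ℕ => Real.log (n ((j : ℝ) + 2)) - Real.log (n ((j : ℝ) + 1)))
      Filter.atTop (nhds (-Real.log (L 1))) := by
    have hlog := ((Real.continuousAt_log hL1pos.ne').tendsto.comp hL1).neg
    refine hlog.congr (fun j => ?_)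
    have h1 : (0:ℝ) < (j : ℝ) + 1 := by positivity
    have h2 : (0:ℝ) < (j : ℝ) + 2 := by positivity
    show -(Real.log (n ((j:ℝ)+1) / n ((j:ℝ)+2))) = _
    rw [Real.log_div (hpos _ h1).ne' (hpos _ h2).ne']
    ring
  have hces := hdlim.cesaro
  have htel : ∀ m : ℕ, ∑ i ∈ Finset.range m,
      (Real.log (n ((i : ℝ) + 2)) - Real.log (n ((i : ℝ) + 1)))
      = Real.log (n ((m : ℝ) + 1)) - Real.log (n 1) := by
    intro m
    have := Finset.sum_range_sub (fun i : ℕ => Real.log (n ((i : ℝ) + 1))) m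
    simp only [Nat.cast_add, Nat.cast_one] at this ⊢
    convert this using 2 with i
    · ring_nf
    · norm_num
  -- from Cesàro: (log n(m+1) - log n 1) / m → -log (L 1)
  have hces2 : Filter.Tendsto
      (fun m : ℕ => ((m : ℝ))⁻¹ * (Real.log (n ((m : ℝ) + 1)) - Real.log (n 1)))
      Filter.atTop (nhds (-Real.log (L 1))) := by
    refine hces.congr (fun m => ?_)
    rw [htel m]
  -- from hδ: log n(m+1)/(m+1) → δ along ℕ
  have hδm : Filter.Tendsto (fun m : ℕ => Real.log (n ((m : ℝ) + 1)) / ((m : ℝ) + 1))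
      Filter.atTop (nhds δ) := by
    have h := hδ.comp (tendsto_atTop_add_const_right Filter.atTop (1 : ℝ)
      tendsto_natCast_atTop_atTop)
    simpa [Function.comp_def] using h
  have hcδ : -Real.log (L 1) = δ := by
    have hm1 : Filter.Tendsto (fun m : ℕ => (m : ℝ) / ((m : ℝ) + 1)) Filter.atTop (nhds 1) :=
      tendsto_natCast_div_add_atTop (1 : ℝ)
    have h0' : Filter.Tendsto (fun m : ℕ => Real.log (n 1) / ((m : ℝ) + 1)) Filter.atTop
        (nhds 0) :=
      tendsto_const_nhds.div_atTop
        (tendsto_atTop_add_const_right Filter.atTop (1 : ℝ) tendsto_natCast_atTop_atTop)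
    have h4 := ((hces2.mul hm1).add h0')
    rw [mul_one, add_zero] at h4
    refine tendsto_nhds_unique ?_ hδm
    refine h4.congr' ?_
    filter_upwards [eventually_ge_atTop 1] with m hm
    have hm0 : ((m : ℝ)) ≠ 0 := by
      have h1 : (1:ℝ) ≤ (m:ℝ) := by exact_mod_cast hm
      linarith
    have hm1' : ((m : ℝ) + 1) ≠ 0 := by positivity
    field_simp
    ring
  have hLone : L 1 = Real.exp (-δ) := by
    rw [← Real.exp_log hL1pos]
    congr 1
    linarith [hcδ]
  -- L (k) = exp (-δ k) for naturals, via L x ^ m = L (m x)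
  have Lpow : ∀ (m : ℕ) (x : ℝ), 0 ≤ x → L ((m : ℝ) * x) = L x ^ m := by
    intro m
    induction m with
    | zero => intro x hx; simp [L0]
    | succ k ih =>
        intro x hx
        have e : ((k + 1 : ℕ) : ℝ) * x = (k : ℝ) * x + x := by push_cast; ring
        rw [e, Lmul _ _ (by positivity) hx, ih x hx, pow_succ]
  have Lnat : ∀ k : ℕ, L (k : ℝ) = Real.exp (-δ * k) := by
    intro k
    have := Lpow k 1 zero_le_one
    rw [mul_one] at this
    rw [this, hLone, ← Real.exp_nat_mul]
    ring_nf
  -- final: L x = exp (-δ x)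
  intro x hx
  have hx' := (hL x hx).1
  have key : Real.log (L x) + δ * x = 0 := by
    have hbound : ∀ m : ℕ, 0 < m → |Real.log (L x) + δ * x| ≤ δ / m := by
      intro m hm
      set y : ℝ := (m : ℝ) * x with hy
      have hy0 : 0 ≤ y := by positivity
      have hLy : L y = L x ^ m := Lpow m x hx
      have hup : (m : ℝ) * Real.log (L x) ≤ -δ * ⌊y⌋₊ := by
        have h1 : L y ≤ L (⌊y⌋₊ : ℝ) := Lanti _ _ (by positivity) (Nat.floor_le hy0)
        rw [Lnat] at h1
        have := Real.log_le_log (by rw [hLy] at *; positivity) h1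
        rwa [hLy, Real.log_pow, Real.log_exp] at this
      have hlo : -δ * ⌈y⌉₊ ≤ (m : ℝ) * Real.log (L x) := by
        have h1 : L (⌈y⌉₊ : ℝ) ≤ L y := Lanti _ _ hy0 (Nat.le_ceil y)
        rw [Lnat] at h1
        have := Real.log_le_log (Real.exp_pos _) h1
        rwa [hLy, Real.log_pow, Real.log_exp] at this
      have hfl : y - 1 ≤ (⌊y⌋₊ : ℝ) := by
        have := Nat.lt_floor_add_one y
        linarith
      have hcl : (⌈y⌉₊ : ℝ) ≤ y + 1 := by
        have := Nat.ceil_lt_add_one hy0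
        linarith
      have hub2 : (m : ℝ) * Real.log (L x) ≤ -δ * (y - 1) := by
        refine hup.trans ?_
        nlinarith [hfl, hδ0]
      have hlo2 : -δ * (y + 1) ≤ (m : ℝ) * Real.log (L x) := by
        refine le_trans ?_ hlo
        nlinarith [hcl, hδ0]
      have hmpos : (0:ℝ) < m := by exact_mod_cast hm
      rw [abs_le]
      constructor
      · rw [← neg_div, div_le_iff₀ hmpos]
        nlinarith [hlo2]
      · rw [le_div_iff₀ hmpos]
        nlinarith [hub2]
    have htend : Filter.Tendsto (fun m : ℕ => δ / (m : ℝ)) Filter.atTop (nhds 0) :=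
      tendsto_const_div_atTop_nhds_zero_nat δ
    have hle : |Real.log (L x) + δ * x| ≤ 0 := by
      refine ge_of_tendsto htend ?_
      filter_upwards [eventually_gt_atTop 0] with m hm
      exact hbound m hm
    have := abs_nonneg (Real.log (L x) + δ * x)
    have h0 : |Real.log (L x) + δ * x| = 0 := le_antisymm hle this
    exact abs_eq_zero.mp h0
  have hLx : L x = Real.exp (-δ * x) := by
    rw [← Real.exp_log hx']
    congr 1
    linarith [key]
  rw [← hLx]
  exact (hL x hx).2

lemma aux_integral_exp_neg_mul_Ioi {c : ℝ} (hc : 0 < c) :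
    ∫ x in Set.Ioi (0:ℝ), Real.exp (-c * x) = 1 / c := by
  have h := integral_comp_mul_left_Ioi (fun x => Real.exp (-x)) 0 hc
  simp only [mul_zero, integral_exp_neg_Ioi, neg_zero, Real.exp_zero, smul_eq_mul, mul_one] at h
  rw [one_div, ← h]
  congr 1 with x
  rw [neg_mul]

/-- Universal large-time limit of the (shifted, rescaled) clone size generating function:
`lim_{t→∞} (1/n_t) ∫_0^t n_τ (Z_{t−τ}(s) − β) dτ = −Σ_{k≥1} ξ^k/(γ*+k)`,
where `Z_u(s) = 1 − λ/(1 − ξ e^{−λu})`, `ξ = (β−s)/(1−s)`, `λ = 1−β`, `γ* = δ*/λ`. -/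
theorem limit_clone_generating_function
    (β : ℝ) (hβ : β ∈ Set.Ico (0 : ℝ) 1) (lam : ℝ) (hlam : lam = 1 - β)
    (n : ℝ → ℝ) (hn : Assumption1 n) (δ : ℝ)
    (hδlim : Filter.Tendsto (fun t : ℝ => Real.log (n t) / t) Filter.atTop (nhds δ))
    (s ξ γ : ℝ) (hs : |s| < 1) (hξdef : ξ = (β - s) / (1 - s)) (hξ : |ξ| < 1)
    (hγ : γ = δ / lam) :
    Filter.Tendsto
      (fun t : ℝ =>
        (1 / n t) * ∫ τ in (0:ℝ)..t,
          n τ * ((1 - lam / (1 - ξ * Real.exp (-lam * (t - τ)))) - β))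
      Filter.atTop
      (nhds (-∑' k : ℕ, ξ ^ (k + 1) / (γ + (k + 1)))) := by
  obtain ⟨hzero, hcont, hrc, hpos, hmonoOn, hlim⟩ := hn
  have hlam0 : 0 < lam := by rw [hlam]; linarith [hβ.2]
  have hξ1 : 0 < 1 - |ξ| := by linarith [hξ]
  have hmono : Monotone n := aux_monotone hzero hrc hpos hmonoOn
  have hδ0 : 0 ≤ δ := aux_delta_nonneg hpos hmono hδlim
  have hratio := aux_ratio hpos hmono hδlim hδ0 hlim
  have hnonneg : ∀ y : ℝ, 0 ≤ n y := by
    intro y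
    rcases lt_or_ge y 0 with hy | hy
    · rw [hzero y hy]
    · have h := hmono (show (-1:ℝ) ≤ y by linarith)
      rwa [hzero (-1) (by norm_num)] at h
  set f : ℝ → ℝ := fun x => (1 - lam / (1 - ξ * Real.exp (-lam * x))) - β with hf
  have hnmeas : Measurable n := hmono.measurable
  have hfmeas : Measurable f := by
    apply Measurable.sub _ measurable_const
    apply Measurable.sub measurable_const
    exact measurable_const.div
      (measurable_const.sub (measurable_const.mul
        (Real.measurable_exp.comp (measurable_const.mul measurable_id))))
  -- denominator positivity and formula for f
  have hden : ∀ x : ℝ, 0 ≤ x → 1 - |ξ| ≤ 1 - ξ * Real.exp (-lam * x) := by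
    intro x hx
    have h1 : Real.exp (-lam * x) ≤ 1 := by
      rw [← Real.exp_zero]
      apply Real.exp_le_exp.mpr
      nlinarith
    have h2 : ξ * Real.exp (-lam * x) ≤ |ξ| := by
      calc ξ * Real.exp (-lam * x) ≤ |ξ * Real.exp (-lam * x)| := le_abs_self _
        _ = |ξ| * Real.exp (-lam * x) := by
            rw [abs_mul, abs_of_pos (Real.exp_pos _)]
        _ ≤ |ξ| * 1 := by
            exact mul_le_mul_of_nonneg_left h1 (abs_nonneg _)
        _ = |ξ| := mul_one _
    linarith
  have hDpos : ∀ x : ℝ, 0 ≤ x → 0 < 1 - ξ * Real.exp (-lam * x) := by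
    intro x hx
    have := hden x hx
    linarith
  have hfeq : ∀ x : ℝ, 0 ≤ x →
      f x = -(lam * (ξ * Real.exp (-lam * x))) / (1 - ξ * Real.exp (-lam * x)) := by
    intro x hx
    have hD0 : (1 - ξ * Real.exp (-lam * x)) ≠ 0 := (hDpos x hx).ne'
    simp only [hf]
    rw [eq_div_iff hD0, sub_mul, sub_mul, one_mul, div_mul_cancel₀ _ hD0, hlam]
    ring
  have hfbound : ∀ x : ℝ, 0 ≤ x → |f x| ≤ lam * |ξ| / (1 - |ξ|) * Real.exp (-lam * x) := by
    intro x hx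
    have hD := hden x hx
    have hDpos' : 0 < 1 - ξ * Real.exp (-lam * x) := hDpos x hx
    rw [hfeq x hx, abs_div, abs_of_pos hDpos', abs_neg, abs_mul, abs_mul,
      abs_of_pos hlam0, abs_of_pos (Real.exp_pos _)]
    rw [div_le_iff₀ hDpos']
    have h1 : lam * |ξ| / (1 - |ξ|) * Real.exp (-lam * x) * (1 - |ξ|)
        = lam * (|ξ| * Real.exp (-lam * x)) := by
      field_simp
    calc lam * (|ξ| * Real.exp (-lam * x))
        = lam * |ξ| / (1 - |ξ|) * Real.exp (-lam * x) * (1 - |ξ|) := h1.symm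
      _ ≤ lam * |ξ| / (1 - |ξ|) * Real.exp (-lam * x) * (1 - ξ * Real.exp (-lam * x)) := by
          apply mul_le_mul_of_nonneg_left hD
          positivity
  set bound : ℝ → ℝ :=
    Set.indicator (Set.Ioi 0) (fun x => lam * |ξ| / (1 - |ξ|) * Real.exp (-lam * x)) with hbnd
  set F : ℝ → ℝ → ℝ :=
    fun t => Set.indicator (Set.Ioc 0 t) (fun x => n (t - x) * f x / n t) with hFdef
  set philim : ℝ → ℝ :=
    Set.indicator (Set.Ioi 0) (fun x => Real.exp (-δ * x) * f x) with hphi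
  have hdct : Filter.Tendsto (fun t : ℝ => ∫ x, F t x) Filter.atTop
      (nhds (∫ x, philim x)) := by
    apply MeasureTheory.tendsto_integral_filter_of_dominated_convergence bound
    · filter_upwards with t
      simp only [hFdef]
      exact ((((hnmeas.comp (measurable_const.sub measurable_id)).mul hfmeas).div_const
        _).indicator measurableSet_Ioc).aestronglyMeasurable
    · filter_upwards [eventually_gt_atTop (0:ℝ)] with t ht
      filter_upwards with x
      simp only [hFdef]
      by_cases hx : x ∈ Set.Ioc 0 t
      · rw [Set.indicator_of_mem hx]
        have hx0 : 0 < x := hx.1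
        have hxt : x ≤ t := hx.2
        have hnt : 0 < n t := hpos t ht
        have hratio1 : n (t - x) / n t ≤ 1 := by
          rw [div_le_one hnt]; exact hmono (by linarith)
        calc ‖n (t - x) * f x / n t‖ = n (t - x) / n t * |f x| := by
              rw [Real.norm_eq_abs, abs_div, abs_mul, abs_of_nonneg (hnonneg _),
                abs_of_pos hnt, mul_div_right_comm]
          _ ≤ 1 * (lam * |ξ| / (1 - |ξ|) * Real.exp (-lam * x)) := by
              apply mul_le_mul hratio1 (hfbound x hx0.le) (abs_nonneg _) zero_le_one
          _ = bound x := by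
              rw [one_mul, hbnd, Set.indicator_of_mem (Set.mem_Ioi.mpr hx0)]
      · rw [Set.indicator_of_notMem hx]
        simp only [norm_zero]
        exact Set.indicator_nonneg (fun y hy => by positivity) x
    · rw [hbnd, MeasureTheory.integrable_indicator_iff measurableSet_Ioi]
      exact (exp_neg_integrableOn_Ioi 0 hlam0).const_mul _
    · filter_upwards with x
      rcases le_or_gt x 0 with hx | hx
      · have hFx : ∀ t : ℝ, F t x = 0 := by
          intro t
          simp only [hFdef]
          exact Set.indicator_of_notMem (fun h => absurd h.1 (not_lt.mpr hx)) _
        have hpx : philim x = 0 := by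
          simp only [hphi]
          exact Set.indicator_of_notMem (not_lt.mpr hx) _
        rw [hpx]
        simpa [hFx] using (tendsto_const_nhds : Filter.Tendsto (fun _ : ℝ => (0:ℝ))
          Filter.atTop (nhds 0))
      · have hpx : philim x = Real.exp (-δ * x) * f x := by
          simp only [hphi]
          exact Set.indicator_of_mem (Set.mem_Ioi.mpr hx) _
        rw [hpx]
        refine ((hratio x hx.le).mul_const (f x)).congr' ?_
        filter_upwards [eventually_gt_atTop x] with t ht
        simp only [hFdef]
        rw [Set.indicator_of_mem (Set.mem_Ioc.mpr ⟨hx, ht.le⟩), mul_div_right_comm]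
  have heq : ∀ᶠ t : ℝ in Filter.atTop,
      (1 / n t) * (∫ τ in (0:ℝ)..t, n τ * f (t - τ)) = ∫ x, F t x := by
    filter_upwards [eventually_gt_atTop (0:ℝ)] with t ht
    have h1 : (∫ τ in (0:ℝ)..t, n τ * f (t - τ)) = ∫ x in (0:ℝ)..t, n (t - x) * f x := by
      have h := intervalIntegral.integral_comp_sub_left (E := ℝ) (a := (0:ℝ)) (b := t) (fun x => n (t - x) * f x) t
      simp only [sub_sub_cancel, sub_self, sub_zero] at h
      rw [← h]
    have h2 : ∀ x : ℝ, F t x =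
        (Set.indicator (Set.Ioc 0 t) (fun x => n (t - x) * f x) x) / n t := by
      intro x
      simp only [hFdef]
      by_cases hx : x ∈ Set.Ioc 0 t
      · rw [Set.indicator_of_mem hx, Set.indicator_of_mem hx]
      · rw [Set.indicator_of_notMem hx, Set.indicator_of_notMem hx, zero_div]
    rw [h1, intervalIntegral.integral_of_le ht.le,
      ← MeasureTheory.integral_indicator measurableSet_Ioc]
    simp only [h2]
    rw [MeasureTheory.integral_div, one_div, inv_mul_eq_div]
  have hval : (∫ x, philim x) = -∑' k : ℕ, ξ ^ (k + 1) / (γ + (k + 1)) := by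
    rw [hphi, MeasureTheory.integral_indicator measurableSet_Ioi]
    set G : ℕ → ℝ → ℝ :=
      fun k x => -(lam * ξ ^ (k + 1)) * Real.exp (-(δ + ((k:ℝ) + 1) * lam) * x) with hG
    have hc : ∀ k : ℕ, 0 < δ + ((k:ℝ) + 1) * lam := by
      intro k
      have h1 : 0 < ((k:ℝ) + 1) * lam := by positivity
      linarith
    have hGint : ∀ k : ℕ,
        MeasureTheory.Integrable (G k) (MeasureTheory.volume.restrict (Set.Ioi (0:ℝ))) := by
      intro k
      exact ((exp_neg_integrableOn_Ioi 0 (hc k)).const_mul _)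
    have hGnorm : ∀ k : ℕ,
        (∫ x in Set.Ioi (0:ℝ), ‖G k x‖) =
          lam * |ξ| ^ (k + 1) / (δ + ((k:ℝ) + 1) * lam) := by
      intro k
      have he : (fun x => ‖G k x‖) =
          fun x => (lam * |ξ| ^ (k + 1)) * Real.exp (-(δ + ((k:ℝ) + 1) * lam) * x) := by
        funext x
        simp only [hG]
        rw [Real.norm_eq_abs, abs_mul, abs_neg, abs_mul, abs_of_pos hlam0, abs_pow,
          abs_of_pos (Real.exp_pos _)]
      rw [he, MeasureTheory.integral_const_mul, aux_integral_exp_neg_mul_Ioi (hc k),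
        mul_one_div]
    have hGsum : Summable (fun k : ℕ => ∫ x in Set.Ioi (0:ℝ), ‖G k x‖) := by
      have hsum2 : Summable (fun k : ℕ => |ξ| ^ (k + 1)) := by
        have := (summable_geometric_of_lt_one (abs_nonneg ξ) hξ).mul_right |ξ|
        refine this.congr (fun k => ?_)
        rw [← pow_succ]
      refine Summable.of_nonneg_of_le (fun k => ?_) (fun k => ?_) hsum2
      · rw [hGnorm k]
        positivity
      · rw [hGnorm k, div_le_iff₀ (hc k)]
        have h1 : lam ≤ δ + ((k:ℝ) + 1) * lam := by nlinarith [hδ0, hlam0]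
        have h2 : (0:ℝ) ≤ |ξ| ^ (k + 1) := by positivity
        nlinarith
    have hHS := MeasureTheory.hasSum_integral_of_summable_integral_norm hGint hGsum
    have hptw : Set.EqOn (fun x => Real.exp (-δ * x) * f x) (fun x => ∑' k : ℕ, G k x)
        (Set.Ioi (0:ℝ)) := by
      intro x hx
      have hx0 : (0:ℝ) ≤ x := le_of_lt hx
      have hrle1 : Real.exp (-lam * x) ≤ 1 := by
        rw [← Real.exp_zero]
        apply Real.exp_le_exp.mpr
        nlinarith
      have hqlt : ‖ξ * Real.exp (-lam * x)‖ < 1 := by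
        rw [Real.norm_eq_abs, abs_mul, abs_of_pos (Real.exp_pos _)]
        calc |ξ| * Real.exp (-lam * x) ≤ |ξ| * 1 :=
              mul_le_mul_of_nonneg_left hrle1 (abs_nonneg _)
          _ = |ξ| := mul_one _
          _ < 1 := hξ
      have hgeo : ∑' k : ℕ, (ξ * Real.exp (-lam * x)) ^ (k + 1) =
          ξ * Real.exp (-lam * x) / (1 - ξ * Real.exp (-lam * x)) := by
        have h := tsum_geometric_of_norm_lt_one hqlt
        calc ∑' k : ℕ, (ξ * Real.exp (-lam * x)) ^ (k + 1)
            = ∑' k : ℕ, (ξ * Real.exp (-lam * x)) * (ξ * Real.exp (-lam * x)) ^ k := by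
              congr 1 with k
              rw [pow_succ']
          _ = (ξ * Real.exp (-lam * x)) * ∑' k : ℕ, (ξ * Real.exp (-lam * x)) ^ k :=
              tsum_mul_left
          _ = (ξ * Real.exp (-lam * x)) * (1 - ξ * Real.exp (-lam * x))⁻¹ := by rw [h]
          _ = ξ * Real.exp (-lam * x) / (1 - ξ * Real.exp (-lam * x)) :=
              (div_eq_mul_inv _ _).symm
      have hGx : ∀ k : ℕ, G k x =
          (-lam * Real.exp (-δ * x)) * (ξ * Real.exp (-lam * x)) ^ (k + 1) := by
        intro k
        have he : Real.exp (-(δ + ((k:ℝ) + 1) * lam) * x) =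
            Real.exp (-δ * x) * (Real.exp (-lam * x)) ^ (k + 1) := by
          rw [← Real.exp_nat_mul, ← Real.exp_add]
          congr 1
          push_cast
          ring
        simp only [hG]
        rw [he, mul_pow]
        ring
      have hsum3 : ∑' k : ℕ, G k x =
          (-lam * Real.exp (-δ * x)) *
            (ξ * Real.exp (-lam * x) / (1 - ξ * Real.exp (-lam * x))) := by
        calc ∑' k : ℕ, G k x
            = ∑' k : ℕ, (-lam * Real.exp (-δ * x)) * (ξ * Real.exp (-lam * x)) ^ (k + 1) := by
              congr 1 with k
              exact hGx k
          _ = (-lam * Real.exp (-δ * x)) * ∑' k : ℕ, (ξ * Real.exp (-lam * x)) ^ (k + 1) :=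
              tsum_mul_left
          _ = _ := by rw [hgeo]
      show Real.exp (-δ * x) * f x = ∑' k : ℕ, G k x
      rw [hsum3, hfeq x hx0]
      have hD0 : (1 - ξ * Real.exp (-lam * x)) ≠ 0 := (hDpos x hx0).ne'
      field_simp
    have hint_eq : (∫ x in Set.Ioi (0:ℝ), Real.exp (-δ * x) * f x) =
        ∫ x in Set.Ioi (0:ℝ), (∑' k : ℕ, G k x) :=
      MeasureTheory.setIntegral_congr_fun measurableSet_Ioi hptw
    have hGval : ∀ k : ℕ, (∫ x in Set.Ioi (0:ℝ), G k x) = -(ξ ^ (k + 1) / (γ + ((k:ℝ) + 1))) := by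
      intro k
      simp only [hG]
      rw [MeasureTheory.integral_const_mul, aux_integral_exp_neg_mul_Ioi (hc k), hγ]
      have h1 : (δ + ((k:ℝ) + 1) * lam) ≠ 0 := (hc k).ne'
      field_simp
    have htsum : ∑' k : ℕ, (∫ x in Set.Ioi (0:ℝ), G k x) =
        ∫ x in Set.Ioi (0:ℝ), (∑' k : ℕ, G k x) := hHS.tsum_eq
    rw [hint_eq, ← htsum]
    rw [show (fun k : ℕ => ∫ x in Set.Ioi (0:ℝ), G k x)
        = fun k : ℕ => -(ξ ^ (k + 1) / (γ + ((k:ℝ) + 1))) from funext hGval]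
    rw [tsum_neg]
  rw [← hval]
  exact Filter.Tendsto.congr' (EventuallyEq.symm heq) hdct
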